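/- If A ⊆ ℝ² is a set whose distance set satisfies Δ(A) ⊆ {4n + 1 : n ∈ ℕ}, then A has at most 3 elements. -/

import Mathlib

lemma cast_one_mod_eight {m : ℤ} (hm : m % 8 = 1) : (m : ZMod 8) = 1 := by
  obtain ⟨k, hk⟩ : ∃ k, m = 8 * k + 1 := ⟨m / 8, by omega⟩
  subst hk
  push_cast
  rw [show ((8 : ZMod 8)) = 0 from rfl]
  ring

lemma four_points_false (a b c d : EuclideanSpace ℝ (Fin 2))
    (nab nac nad nbc nbd ncd : ℕ)
    (hab : dist a b = 4 * (nab : ℝ) + 1)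
    (hac : dist a c = 4 * (nac : ℝ) + 1)
    (had : dist a d = 4 * (nad : ℝ) + 1)
    (hbc : dist b c = 4 * (nbc : ℝ) + 1)
    (hbd : dist b d = 4 * (nbd : ℝ) + 1)
    (hcd : dist c d = 4 * (ncd : ℝ) + 1) : False := by
  set x := b - a with hxdef
  set y := c - a with hydef
  set z := d - a with hzdef
  -- integer data
  set A2 : ℤ := (4 * (nab : ℤ) + 1) ^ 2 with hA2def
  set B2 : ℤ := (4 * (nac : ℤ) + 1) ^ 2 with hB2def
  set C2 : ℤ := (4 * (nad : ℤ) + 1) ^ 2 with hC2def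
  set D2 : ℤ := (4 * (nbc : ℤ) + 1) ^ 2 with hD2def
  set E2 : ℤ := (4 * (nbd : ℤ) + 1) ^ 2 with hE2def
  set F2 : ℤ := (4 * (ncd : ℤ) + 1) ^ 2 with hF2def
  set P : ℤ := A2 + B2 - D2 with hPdef
  set Q : ℤ := A2 + C2 - E2 with hQdef
  set R : ℤ := B2 + C2 - F2 with hRdef
  -- squared norms as casts of integers
  have hnx : ‖x‖ ^ 2 = ((A2 : ℤ) : ℝ) := by
    rw [hxdef, ← dist_eq_norm, dist_comm, hab, hA2def]; push_cast; ring
  have hny : ‖y‖ ^ 2 = ((B2 : ℤ) : ℝ) := by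
    rw [hydef, ← dist_eq_norm, dist_comm, hac, hB2def]; push_cast; ring
  have hnz : ‖z‖ ^ 2 = ((C2 : ℤ) : ℝ) := by
    rw [hzdef, ← dist_eq_norm, dist_comm, had, hC2def]; push_cast; ring
  have hxy : ‖x - y‖ ^ 2 = ((D2 : ℤ) : ℝ) := by
    have h : x - y = b - c := by rw [hxdef, hydef]; abel
    rw [h, ← dist_eq_norm, hbc, hD2def]; push_cast; ring
  have hxz : ‖x - z‖ ^ 2 = ((E2 : ℤ) : ℝ) := by
    have h : x - z = b - d := by rw [hxdef, hzdef]; abel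
    rw [h, ← dist_eq_norm, hbd, hE2def]; push_cast; ring
  have hyz : ‖y - z‖ ^ 2 = ((F2 : ℤ) : ℝ) := by
    have h : y - z = c - d := by rw [hydef, hzdef]; abel
    rw [h, ← dist_eq_norm, hcd, hF2def]; push_cast; ring
  -- doubled inner products as casts of integers
  have eP : 2 * (inner ℝ x y : ℝ) = ((P : ℤ) : ℝ) := by
    have h := norm_sub_sq_real x y
    rw [hnx, hny, hxy] at h
    rw [hPdef]; push_cast at h ⊢; linarith
  have eQ : 2 * (inner ℝ x z : ℝ) = ((Q : ℤ) : ℝ) := by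
    have h := norm_sub_sq_real x z
    rw [hnx, hnz, hxz] at h
    rw [hQdef]; push_cast at h ⊢; linarith
  have eR : 2 * (inner ℝ y z : ℝ) = ((R : ℤ) : ℝ) := by
    have h := norm_sub_sq_real y z
    rw [hny, hnz, hyz] at h
    rw [hRdef]; push_cast at h ⊢; linarith
  -- linear dependence of three vectors in the plane
  have hdep : ¬ LinearIndependent ℝ ![x, y, z] := by
    intro h
    have := h.fintype_card_le_finrank
    simp [finrank_euclideanSpace_fin] at this
  obtain ⟨g, hsum, i0, hg0⟩ := Fintype.not_linearIndependent_iff.mp hdep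
  rw [Fin.sum_univ_three] at hsum
  simp only [Matrix.cons_val_zero, Matrix.cons_val_one, Matrix.head_cons,
    Matrix.cons_val_two, Matrix.tail_cons] at hsum
  have h0 : g 0 * (inner ℝ x x : ℝ) + g 1 * (inner ℝ x y : ℝ) + g 2 * (inner ℝ x z : ℝ) = 0 := by
    have := congrArg (fun v => (inner ℝ x v : ℝ)) hsum
    simp only [inner_add_right, real_inner_smul_right, inner_zero_right] at this
    linarith [this]
  have h1 : g 0 * (inner ℝ x y : ℝ) + g 1 * (inner ℝ y y : ℝ) + g 2 * (inner ℝ y z : ℝ) = 0 := by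
    have := congrArg (fun v => (inner ℝ y v : ℝ)) hsum
    simp only [inner_add_right, real_inner_smul_right, inner_zero_right] at this
    rw [real_inner_comm x y] at this
    linarith [this]
  have h2 : g 0 * (inner ℝ x z : ℝ) + g 1 * (inner ℝ y z : ℝ) + g 2 * (inner ℝ z z : ℝ) = 0 := by
    have := congrArg (fun v => (inner ℝ z v : ℝ)) hsum
    simp only [inner_add_right, real_inner_smul_right, inner_zero_right] at this
    rw [real_inner_comm x z, real_inner_comm y z] at this
    linarith [this]
  have hxx : (inner ℝ x x : ℝ) = ((A2 : ℤ) : ℝ) := by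
    rw [real_inner_self_eq_norm_sq, hnx]
  have hyy : (inner ℝ y y : ℝ) = ((B2 : ℤ) : ℝ) := by
    rw [real_inner_self_eq_norm_sq, hny]
  have hzz : (inner ℝ z z : ℝ) = ((C2 : ℤ) : ℝ) := by
    rw [real_inner_self_eq_norm_sq, hnz]
  -- Gram matrix (doubled)
  set M : Matrix (Fin 3) (Fin 3) ℝ :=
    !![((2 * A2 : ℤ) : ℝ), ((P : ℤ) : ℝ), ((Q : ℤ) : ℝ);
       ((P : ℤ) : ℝ), ((2 * B2 : ℤ) : ℝ), ((R : ℤ) : ℝ);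
       ((Q : ℤ) : ℝ), ((R : ℤ) : ℝ), ((2 * C2 : ℤ) : ℝ)] with hM
  have hdet : M.det = 0 := by
    rw [← Matrix.exists_mulVec_eq_zero_iff]
    refine ⟨g, fun h => hg0 (by rw [h]; rfl), ?_⟩
    funext i
    fin_cases i
    · simp [hM, Matrix.mulVec, dotProduct, Fin.sum_univ_three, Matrix.cons_val_two]
      linear_combination 2 * h0 - 2 * g 0 * hxx - g 1 * eP - g 2 * eQ
    · simp [hM, Matrix.mulVec, dotProduct, Fin.sum_univ_three, Matrix.cons_val_two]
      linear_combination 2 * h1 - 2 * g 1 * hyy - g 0 * eP - g 2 * eR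
    · simp [hM, Matrix.mulVec, dotProduct, Fin.sum_univ_three, Matrix.cons_val_two]
      linear_combination 2 * h2 - 2 * g 2 * hzz - g 0 * eQ - g 1 * eR
  -- expand the determinant
  rw [Matrix.det_fin_three] at hdet
  simp [hM, Matrix.cons_val_two] at hdet
  have keyR : ((8 * A2 * B2 * C2 - 2 * A2 * R ^ 2 - 2 * B2 * Q ^ 2 - 2 * C2 * P ^ 2
      + 2 * P * Q * R : ℤ) : ℝ) = 0 := by
    push_cast
    linear_combination hdet
  have keyZ : 8 * A2 * B2 * C2 - 2 * A2 * R ^ 2 - 2 * B2 * Q ^ 2 - 2 * C2 * P ^ 2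
      + 2 * P * Q * R = 0 := by exact_mod_cast keyR
  -- congruences mod 8
  have hA2m : A2 % 8 = 1 := by
    have : A2 = 8 * (2 * (nab : ℤ) ^ 2 + nab) + 1 := by rw [hA2def]; ring
    omega
  have hB2m : B2 % 8 = 1 := by
    have : B2 = 8 * (2 * (nac : ℤ) ^ 2 + nac) + 1 := by rw [hB2def]; ring
    omega
  have hC2m : C2 % 8 = 1 := by
    have : C2 = 8 * (2 * (nad : ℤ) ^ 2 + nad) + 1 := by rw [hC2def]; ring
    omega
  have hD2m : D2 % 8 = 1 := by
    have : D2 = 8 * (2 * (nbc : ℤ) ^ 2 + nbc) + 1 := by rw [hD2def]; ring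
    omega
  have hE2m : E2 % 8 = 1 := by
    have : E2 = 8 * (2 * (nbd : ℤ) ^ 2 + nbd) + 1 := by rw [hE2def]; ring
    omega
  have hF2m : F2 % 8 = 1 := by
    have : F2 = 8 * (2 * (ncd : ℤ) ^ 2 + ncd) + 1 := by rw [hF2def]; ring
    omega
  have hPm : P % 8 = 1 := by rw [hPdef]; omega
  have hQm : Q % 8 = 1 := by rw [hQdef]; omega
  have hRm : R % 8 = 1 := by rw [hRdef]; omega
  -- contradiction in ZMod 8
  have hz := congrArg (fun m : ℤ => (m : ZMod 8)) keyZ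
  simp only [Int.cast_add, Int.cast_sub, Int.cast_mul, Int.cast_pow, Int.cast_ofNat] at hz
  push_cast at hz
  rw [cast_one_mod_eight hA2m, cast_one_mod_eight hB2m, cast_one_mod_eight hC2m,
    cast_one_mod_eight hPm, cast_one_mod_eight hQm, cast_one_mod_eight hRm] at hz
  exact absurd hz (by decide)

/-- If all pairwise distances between distinct points of `A ⊆ ℝ²` lie in
`{4n + 1 : n ∈ ℕ}`, then `A` has at most 3 elements. -/
theorem distance_set_four_int_plus_one (A : Set (EuclideanSpace ℝ (Fin 2)))
    (hA : ∀ a ∈ A, ∀ a' ∈ A, a ≠ a' → ∃ n : ℕ, dist a a' = 4 * (n : ℝ) + 1) :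
    A.Finite ∧ A.ncard ≤ 3 := by
  by_contra hcon
  have h4 : ∃ t ⊆ A, t.ncard = 4 := by
    by_cases hf : A.Finite
    · refine Set.exists_subset_card_eq ?_
      by_contra hlt
      exact hcon ⟨hf, by omega⟩
    · obtain ⟨t, ht, -, htc⟩ := Set.Infinite.exists_subset_ncard_eq hf 4
      exact ⟨t, ht, htc⟩
  obtain ⟨t, htA, ht4⟩ := h4
  obtain ⟨p1, t1, hp1, rfl, hc1⟩ := Set.eq_insert_of_ncard_eq_succ ht4
  obtain ⟨p2, t2, hp2, rfl, hc2⟩ := Set.eq_insert_of_ncard_eq_succ hc1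
  obtain ⟨p3, t3, hp3, rfl, hc3⟩ := Set.eq_insert_of_ncard_eq_succ hc2
  obtain ⟨p4, t4, hp4, rfl, hc4⟩ := Set.eq_insert_of_ncard_eq_succ hc3
  have m1 : p1 ∈ A := htA (by simp)
  have m2 : p2 ∈ A := htA (by simp)
  have m3 : p3 ∈ A := htA (by simp)
  have m4 : p4 ∈ A := htA (by simp)
  have d12 : p1 ≠ p2 := by rintro rfl; exact hp1 (by simp)
  have d13 : p1 ≠ p3 := by rintro rfl; exact hp1 (by simp)
  have d14 : p1 ≠ p4 := by rintro rfl; exact hp1 (by simp)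
  have d23 : p2 ≠ p3 := by rintro rfl; exact hp2 (by simp)
  have d24 : p2 ≠ p4 := by rintro rfl; exact hp2 (by simp)
  have d34 : p3 ≠ p4 := by rintro rfl; exact hp3 (by simp)
  obtain ⟨nab, hab⟩ := hA p1 m1 p2 m2 d12
  obtain ⟨nac, hac⟩ := hA p1 m1 p3 m3 d13
  obtain ⟨nad, had⟩ := hA p1 m1 p4 m4 d14
  obtain ⟨nbc, hbc⟩ := hA p2 m2 p3 m3 d23
  obtain ⟨nbd, hbd⟩ := hA p2 m2 p4 m4 d24
  obtain ⟨ncd, hcd⟩ := hA p3 m3 p4 m4 d34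
  exact four_points_false p1 p2 p3 p4 nab nac nad nbc nbd ncd hab hac had hbc hbd hcd
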